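/- Let G be an infinite group. Then G is Z_mon-cofinite if and only if either G has prime exponent or G satisfies the weak cancellation law (WCL). -/

import Mathlib

/-- `G` is `Z_mon`-cofinite: for every `n ≥ 1` and `g ∈ G`, the set of `n`-th roots of `g`
is either finite or all of `G`. -/
def ZmonCofinite (G : Type*) [Group G] : Prop :=
  ∀ n : ℕ, 1 ≤ n → ∀ g : G,
    {x : G | x ^ n = g}.Finite ∨ {x : G | x ^ n = g} = Set.univ

/-- `G` satisfies the weak cancellation law: for every `n ≥ 1` the map `x ↦ x^n`
is finitely-many-to-one. -/
def WCL (G : Type*) [Group G] : Prop :=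
  ∀ n : ℕ, 1 ≤ n → ∀ a : G, {x : G | x ^ n = a}.Finite

/-- `G` is almost torsion-free: every `n`-socle `G[n]` is finite. -/
def AlmostTorsionFree (G : Type*) [Group G] : Prop :=
  ∀ n : ℕ, 1 ≤ n → {x : G | x ^ n = 1}.Finite

/-- `G` has prime exponent. -/
def HasPrimeExponent (G : Type*) [Group G] : Prop :=
  ∃ p : ℕ, p.Prime ∧ ∀ x : G, x ^ p = 1

/-- An infinite group `G` is `Z_mon`-cofinite if and only if either `G` has prime exponent
or `G` satisfies the weak cancellation law. -/
theorem stmt_0 {G : Type*} [Group G] [Infinite G] :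
    ZmonCofinite G ↔ HasPrimeExponent G ∨ WCL G := by
  constructor
  · intro hZ
    by_cases hW : WCL G
    · exact Or.inr hW
    · left
      simp only [WCL, not_forall] at hW
      obtain ⟨n, hn, a, ha⟩ := hW
      have huniv : {x : G | x ^ n = a} = Set.univ := (hZ n hn a).resolve_left ha
      have ha1 : a = 1 := by
        have := Set.eq_univ_iff_forall.mp huniv 1
        simpa using this.symm
      have hex : ∃ m : ℕ, 1 ≤ m ∧ ∀ x : G, x ^ m = 1 := by
        refine ⟨n, hn, fun x => ?_⟩
        have := Set.eq_univ_iff_forall.mp huniv x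
        simpa [ha1] using this
      classical
      set e := Nat.find hex with he_def
      obtain ⟨hepos, hepow⟩ := Nat.find_spec hex
      rw [← he_def] at hepos hepow
      have hmin : ∀ m < e, ¬(1 ≤ m ∧ ∀ x : G, x ^ m = 1) := fun m hm => Nat.find_min hex hm
      have hne1 : e ≠ 1 := by
        intro h1
        obtain ⟨x, y, hxy⟩ := exists_pair_ne G
        have hx := hepow x; have hy := hepow y
        rw [h1, pow_one] at hx hy
        exact hxy (hx.trans hy.symm)
      set p := e.minFac with hp_def
      have hp : p.Prime := Nat.minFac_prime hne1
      by_cases hS : {y : G | y ^ p = 1} = Set.univ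
      · exact ⟨p, hp, fun x => Set.eq_univ_iff_forall.mp hS x⟩
      · exfalso
        have hSfin : {y : G | y ^ p = 1}.Finite := (hZ p hp.one_le 1).resolve_right hS
        have hpd : p ∣ e := Nat.minFac_dvd e
        have hqpos : 1 ≤ e / p := Nat.div_pos (Nat.minFac_le hepos) hp.pos
        have hqlt : e / p < e := Nat.div_lt_self hepos hp.one_lt
        have hmem : ∀ x : G, x ^ (e / p) ∈ {y : G | y ^ p = 1} := by
          intro x
          have : (x ^ (e / p)) ^ p = x ^ e := by
            rw [← pow_mul, Nat.div_mul_cancel hpd]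
          simpa [Set.mem_setOf_eq, this] using hepow x
        -- some fiber is infinite
        have hfib : ∃ g ∈ {y : G | y ^ p = 1}, ¬ {x : G | x ^ (e / p) = g}.Finite := by
          by_contra hc
          push_neg at hc
          have hcov : (Set.univ : Set G) ⊆
              ⋃ g ∈ {y : G | y ^ p = 1}, {x : G | x ^ (e / p) = g} := by
            intro x _
            exact Set.mem_biUnion (hmem x) rfl
          have : (Set.univ : Set G).Finite :=
            Set.Finite.subset (Set.Finite.biUnion hSfin hc) hcov
          exact Set.infinite_univ this
        obtain ⟨g, _, hginf⟩ := hfib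
        have hgu : {x : G | x ^ (e / p) = g} = Set.univ :=
          (hZ (e / p) hqpos g).resolve_left hginf
        have hg1 : g = 1 := by
          have := Set.eq_univ_iff_forall.mp hgu 1
          simpa using this.symm
        refine hmin (e / p) hqlt ⟨hqpos, fun x => ?_⟩
        have := Set.eq_univ_iff_forall.mp hgu x
        simpa [hg1] using this
  · rintro (⟨p, hp, hpow⟩ | hW)
    case inr => exact fun n hn g => Or.inl (hW n hn g)
    · intro n hn g
      by_cases hdvd : p ∣ n
      · obtain ⟨m, rfl⟩ := hdvd
        by_cases hg : g = 1
        · right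
          ext x
          simp [pow_mul, hpow, hg]
        · left
          have : {x : G | x ^ (p * m) = g} = ∅ := by
            ext x
            simp only [Set.mem_setOf_eq, Set.mem_empty_iff_false, iff_false]
            rw [pow_mul, hpow, one_pow]
            exact fun h => hg h.symm
          rw [this]; exact Set.finite_empty
      · left
        have hcop : Nat.Coprime n p := ((hp.coprime_iff_not_dvd).mpr hdvd).symm
        obtain ⟨k, -, hk⟩ := Nat.exists_mul_mod_eq_one_of_coprime hcop hp.one_lt
        have hsub : {x : G | x ^ n = g} ⊆ {g ^ k} := by
          intro x hx
          simp only [Set.mem_setOf_eq] at hx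
          have h1 : x ^ (n * k) = g ^ k := by rw [pow_mul, hx]
          have h2 : x ^ (n * k) = x := by
            conv_lhs => rw [← Nat.div_add_mod (n * k) p]
            rw [pow_add, pow_mul, hpow, one_pow, one_mul, hk, pow_one]
          have : x = g ^ k := by rw [← h2, h1]
          simp [this]
        exact (Set.finite_singleton _).subset hsub
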